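/- Let M be an imprimitivity Hilbert C*-bimodule over unital C*-algebras A and B (with A, B commutative so the canonical isomorphism exists), and let α ∈ A, β ∈ B be the elements satisfying φ_M(⟨x,y⟩_A) = ⟨y, α·x⟩_B and ψ_M(⟨x,y⟩_B) = ⟨y·β, x⟩_A for all x,y ∈ M, where ψ_M = φ_M⁻¹. Then α·x·β = x for all x ∈ M, and consequently φ_M(α)·β = 1_B and ψ_M(β)·α = 1_A. -/
import Mathlib


/-- A pre-Hilbert C*-bimodule `M` over unital C*-algebras `A` (on the left) and
`B` (on the right): a left pre-Hilbert C*-module over `A` (inner product `innerL`,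
`A`-linear in the first variable) and a right pre-Hilbert C*-module over `B`
(inner product `innerR`, `B`-linear in the second variable), with compatible
actions. -/
structure PreHilbertBimodule (A B M : Type*) [CStarAlgebra A] [CStarAlgebra B]
    [AddCommGroup M] [Module ℂ M] where
  lsmul : A → M → M
  rsmul : M → B → M
  innerL : M → M → A
  innerR : M → M → B
  lsmul_dist : ∀ a x y, lsmul a (x + y) = lsmul a x + lsmul a y
  add_lsmul : ∀ a b x, lsmul (a + b) x = lsmul a x + lsmul b x
  mul_lsmul : ∀ a b x, lsmul (a * b) x = lsmul a (lsmul b x)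
  one_lsmul : ∀ x, lsmul 1 x = x
  lsmul_csmul : ∀ (c : ℂ) a x, lsmul a (c • x) = c • lsmul a x
  csmul_lsmul : ∀ (c : ℂ) a x, lsmul (c • a) x = c • lsmul a x
  rsmul_dist : ∀ x y b, rsmul (x + y) b = rsmul x b + rsmul y b
  rsmul_add : ∀ x a b, rsmul x (a + b) = rsmul x a + rsmul x b
  rsmul_mul : ∀ x a b, rsmul (rsmul x a) b = rsmul x (a * b)
  rsmul_one : ∀ x, rsmul x 1 = x
  rsmul_csmul : ∀ (c : ℂ) x b, rsmul (c • x) b = c • rsmul x b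
  rsmul_calg : ∀ (c : ℂ) x b, rsmul x (c • b) = c • rsmul x b
  lsmul_rsmul : ∀ a x b, lsmul a (rsmul x b) = rsmul (lsmul a x) b
  innerR_add_right : ∀ x y z, innerR x (y + z) = innerR x y + innerR x z
  innerR_rsmul_right : ∀ x y b, innerR x (rsmul y b) = innerR x y * b
  innerR_conj_symm : ∀ x y, innerR y x = star (innerR x y)
  innerR_csmul_right : ∀ (c : ℂ) x y, innerR x (c • y) = c • innerR x y
  innerR_self_pos : ∀ x, ∃ b, innerR x x = star b * b
  innerR_self_definite : ∀ x, innerR x x = 0 → x = 0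
  innerL_add_left : ∀ x y z, innerL (x + y) z = innerL x z + innerL y z
  innerL_lsmul_left : ∀ a x y, innerL (lsmul a x) y = a * innerL x y
  innerL_conj_symm : ∀ x y, innerL y x = star (innerL x y)
  innerL_csmul_left : ∀ (c : ℂ) x y, innerL (c • x) y = c • innerL x y
  innerL_self_pos : ∀ x, ∃ a, innerL x x = star a * a
  innerL_self_definite : ∀ x, innerL x x = 0 → x = 0
  innerR_lsmul : ∀ a x y, innerR x (lsmul a y) = innerR (lsmul (star a) x) y
  innerL_rsmul : ∀ x y b, innerL (rsmul x b) y = innerL x (rsmul y (star b))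

/-- An imprimitivity (equivalence) Hilbert C*-bimodule over `A` and `B`: a
pre-Hilbert C*-bimodule that is full as a left and as a right Hilbert C*-module,
satisfies the imprimitivity condition `⟨x,y⟩_A·z = x·⟨y,z⟩_B`, and is complete
(for the common norm induced by the inner products). -/
structure ImprimitivityBimodule (A B M : Type*) [CStarAlgebra A] [CStarAlgebra B]
    [AddCommGroup M] [Module ℂ M] extends PreHilbertBimodule A B M where
  imprimitivity : ∀ x y z, lsmul (innerL x y) z = rsmul x (innerR y z)
  fullL : closure (Submodule.span ℂ {a : A | ∃ x y : M, a = innerL x y} : Set A)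
      = Set.univ
  fullR : closure (Submodule.span ℂ {b : B | ∃ x y : M, b = innerR x y} : Set B)
      = Set.univ
  complete : ∀ f : ℕ → M,
    (∀ ε > 0, ∃ N, ∀ m ≥ N, ∀ n ≥ N,
      ‖innerR (f m - f n) (f m - f n)‖ < ε) →
    ∃ x, ∀ ε > 0, ∃ N, ∀ n ≥ N, ‖innerR (f n - x) (f n - x)‖ < ε

/-- Let `M` be an imprimitivity Hilbert C*-bimodule over commutative unital
C*-algebras `A` and `B`, with canonical isomorphism `φ_M` (inverse `ψ_M`), and let
`α ∈ A`, `β ∈ B` satisfy `φ_M(⟨x,y⟩_A) = ⟨y, α·x⟩_B` and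
`ψ_M(⟨x,y⟩_B) = ⟨y·β, x⟩_A` for all `x, y ∈ M`.  Then `α·x·β = x` for all `x ∈ M`,
and consequently `φ_M(α)·β = 1_B` and `ψ_M(β)·α = 1_A`. -/
theorem alpha_beta_relations
    {A B M : Type*} [CommCStarAlgebra A] [CommCStarAlgebra B]
    [AddCommGroup M] [Module ℂ M]
    (H : ImprimitivityBimodule A B M)
    {n m : ℕ} (w z : Fin n → M) (t u : Fin m → M)
    (hwz : (∑ j, H.innerR (w j) (z j)) = 1)
    (htu : (∑ i, H.innerL (t i) (u i)) = 1)
    (φ : A → B) (hφ : ∀ a, φ a = ∑ j, H.innerR (w j) (H.lsmul a (z j)))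
    (ψ : B → A) (hψ : ∀ b, ψ b = ∑ i, H.innerL (H.rsmul (t i) b) (u i))
    (hψφ : ∀ a : A, ψ (φ a) = a) (hφψ : ∀ b : B, φ (ψ b) = b)
    (hax : ∀ (a : A) (x : M), H.lsmul a x = H.rsmul x (φ a))
    (α : A) (hα : ∀ x y : M, φ (H.innerL x y) = H.innerR y (H.lsmul α x))
    (β : B) (hβ : ∀ x y : M, ψ (H.innerR x y) = H.innerL (H.rsmul y β) x) :
    (∀ x : M, H.rsmul (H.lsmul α x) β = x) ∧
    φ α * β = 1 ∧
    ψ β * α = 1 := by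
  have hsub : ∀ u v z : M, H.innerL (u - v) z = H.innerL u z - H.innerL v z := by
    intro u v z
    have h : u - v = u + (-1 : ℂ) • v := by
      rw [neg_one_smul]; exact sub_eq_add_neg u v
    rw [h, H.innerL_add_left, H.innerL_csmul_left, neg_one_smul, ← sub_eq_add_neg]
  have key : ∀ x : M, H.rsmul (H.lsmul α x) β = x := by
    intro x
    have hL : ∀ z : M, H.innerL (H.rsmul (H.lsmul α x) β) z = H.innerL x z := by
      intro z
      calc H.innerL (H.rsmul (H.lsmul α x) β) z
          = ψ (H.innerR z (H.lsmul α x)) := (hβ z (H.lsmul α x)).symm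
        _ = ψ (φ (H.innerL x z)) := by rw [hα x z]
        _ = H.innerL x z := hψφ _
    have hd : H.innerL (H.rsmul (H.lsmul α x) β - x) (H.rsmul (H.lsmul α x) β - x)
        = 0 := by
      rw [hsub, hL, sub_self]
    exact sub_eq_zero.mp (H.innerL_self_definite _ hd)
  refine ⟨key, ?_, ?_⟩
  · rw [hφ, Finset.sum_mul, ← hwz]
    refine Finset.sum_congr rfl fun j _ => ?_
    rw [← H.innerR_rsmul_right, key]
  · rw [hψ, Finset.sum_mul, ← htu]
    refine Finset.sum_congr rfl fun i _ => ?_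
    rw [mul_comm, ← H.innerL_lsmul_left, H.lsmul_rsmul, key]
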